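/- Let a > 0 and let φ : ℝⁿ → ℝ^M, φ(x) = (x_j)_{j∈M}, be the coordinate projection. Then the image of {x ∈ ℝⁿ : v(x) ≤ a} under φ equals {τ ∈ ℝ^M : γ_M(τ) ≤ a}, and the image of {x ∈ ℝⁿ : v(x) < a} under φ equals {τ ∈ ℝ^M : γ_M(τ) < a}; that is, the shadow of the solid ellipsoid Q_{≤a} under projection parallel to the subspace {x : x_j = 0 for all j ∈ M} is the solid ellipsoid in ℝ^M determined by the positive definite form γ_M. -/

import Mathlib

open Matrix

lemma markowitz_key {n : ℕ} (Q : Matrix (Fin n) (Fin n) ℝ) (hQ : Q.PosDef)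
    (M : Finset (Fin n))
    (c : (↥M → ℝ) → (Fin n → ℝ))
    (hc1 : ∀ τ : ↥M → ℝ, ∀ j : ↥M, c τ j.1 = τ j)
    (hc2 : ∀ τ : ↥M → ℝ, ∀ i ∉ M, Q.mulVec (c τ) i = 0)
    (τ : ↥M → ℝ) (x : Fin n → ℝ) (hx : (fun j : ↥M => x j.1) = τ) :
    (c τ) ⬝ᵥ Q.mulVec (c τ) ≤ x ⬝ᵥ Q.mulVec x := by
  set d : Fin n → ℝ := x - c τ with hd
  have hdM : ∀ j ∈ M, d j = 0 := by
    intro j hj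
    have := hc1 τ ⟨j, hj⟩
    have hxj : x j = τ ⟨j, hj⟩ := congrFun hx ⟨j, hj⟩
    simp [hd, hxj, this]
  have cross : d ⬝ᵥ Q.mulVec (c τ) = 0 := by
    rw [dotProduct]
    apply Finset.sum_eq_zero
    intro i _
    by_cases hi : i ∈ M
    · rw [hdM i hi, zero_mul]
    · rw [hc2 τ i hi, mul_zero]
  have cross' : (c τ) ⬝ᵥ Q.mulVec d = 0 := by
    have hsym : Qᵀ = Q := by
      have := hQ.isHermitian
      simpa [Matrix.IsHermitian, Matrix.conjTranspose_eq_transpose_of_trivial] using this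
    calc (c τ) ⬝ᵥ Q.mulVec d = Q.vecMul (c τ) ⬝ᵥ d := by rw [dotProduct_mulVec]
      _ = Qᵀ.mulVec (c τ) ⬝ᵥ d := by rw [Matrix.mulVec_transpose]
      _ = Q.mulVec (c τ) ⬝ᵥ d := by rw [hsym]
      _ = d ⬝ᵥ Q.mulVec (c τ) := dotProduct_comm _ _
      _ = 0 := cross
  have hxd : x = c τ + d := by simp [hd]
  have hdd : 0 ≤ d ⬝ᵥ Q.mulVec d := by
    have := hQ.posSemidef.dotProduct_mulVec_nonneg d
    simpa using this
  have expand : x ⬝ᵥ Q.mulVec x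
      = (c τ) ⬝ᵥ Q.mulVec (c τ) + (c τ) ⬝ᵥ Q.mulVec d + d ⬝ᵥ Q.mulVec (c τ)
        + d ⬝ᵥ Q.mulVec d := by
    rw [hxd, mulVec_add, add_dotProduct, dotProduct_add, dotProduct_add]
    ring
  rw [expand, cross, cross']
  linarith

/-- the shadow of the solid ellipsoid {v ≤ a} under the coordinate
projection φ : ℝⁿ → ℝ^M is the solid ellipsoid {γ_M ≤ a} in ℝ^M, and likewise for
the open ones.  Here for each τ ∈ ℝ^M, c τ is the unique point of h(τ) with
(Q·(c τ))_i = 0 for i ∈ M^c, and γ_M(τ) = v(c τ). -/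
theorem markowitz_shadow_of_ellipsoid {n : ℕ} (hn : 0 < n)
    (Q : Matrix (Fin n) (Fin n) ℝ) (hQ : Q.PosDef)
    (M : Finset (Fin n)) (hMne : M.Nonempty) (hM : M ≠ Finset.univ)
    (a : ℝ) (ha : 0 < a)
    (c : (↥M → ℝ) → (Fin n → ℝ))
    (hc1 : ∀ τ : ↥M → ℝ, ∀ j : ↥M, c τ j.1 = τ j)
    (hc2 : ∀ τ : ↥M → ℝ, ∀ i ∉ M, Q.mulVec (c τ) i = 0) :
    (fun x : Fin n → ℝ => fun j : ↥M => x j.1) '' {x | x ⬝ᵥ Q.mulVec x ≤ a}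
        = {τ : ↥M → ℝ | (c τ) ⬝ᵥ Q.mulVec (c τ) ≤ a} ∧
    (fun x : Fin n → ℝ => fun j : ↥M => x j.1) '' {x | x ⬝ᵥ Q.mulVec x < a}
        = {τ : ↥M → ℝ | (c τ) ⬝ᵥ Q.mulVec (c τ) < a} := by
  constructor
  · ext τ
    constructor
    · rintro ⟨x, hx, rfl⟩
      exact le_trans (markowitz_key Q hQ M c hc1 hc2 _ x rfl) hx
    · intro hτ
      exact ⟨c τ, hτ, funext fun j => hc1 τ j⟩
  · ext τ
    constructor
    · rintro ⟨x, hx, rfl⟩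
      exact lt_of_le_of_lt (markowitz_key Q hQ M c hc1 hc2 _ x rfl) hx
    · intro hτ
      exact ⟨c τ, hτ, funext fun j => hc1 τ j⟩
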